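/- Let (φ_{j1,j2,j3}) be a family satisfying the genus-two Pieri rule with φ_{0,0,0} = 1. For every admissible triple (j1,j2,j3), set N = (j1+j2+j3)/2, d1 = (−j1+j2+j3)/2, d2 = (j1−j2+j3)/2, d3 = (j1+j2−j3)/2. Then there exists a nonzero constant c ∈ ℂ such that the coefficient of φ_{j1,j2,j3} on the monomial x12^{d3}·x13^{d2}·x23^{d1} equals c, and for every (e1,e2,e3) ∈ ℤ³ with e1+e2+e3 ≥ N and (e1,e2,e3) ≠ (d3,d2,d1), the coefficient of φ_{j1,j2,j3} on x12^{e1}·x13^{e2}·x23^{e3} is zero. -/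

import Mathlib

/-- A triple of integers is *admissible* if all entries are nonnegative,
the triangle inequality `|j1 - j2| ≤ j3 ≤ j1 + j2` holds, and `j1+j2+j3` is even. -/
def Admissible (j : ℤ × ℤ × ℤ) : Prop :=
  0 ≤ j.1 ∧ 0 ≤ j.2.1 ∧ 0 ≤ j.2.2 ∧
  |j.1 - j.2.1| ≤ j.2.2 ∧ j.2.2 ≤ j.1 + j.2.1 ∧ 2 ∣ (j.1 + j.2.1 + j.2.2)

/-- Pieri coefficient `K_{a,b}(j1,j2,j3)` as a complex number. -/
noncomputable def Kc (a b j1 j2 j3 : ℤ) : ℂ :=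
  ((a * b : ℤ) : ℂ) *
    (((a*j1 + b*j2 + j3 + a + b + 2 : ℤ) : ℂ) * ((a*j1 + b*j2 - j3 + a + b : ℤ) : ℂ)) /
    (4 * ((j1 : ℂ) + 1) * ((j2 : ℂ) + 1))

/-- Laurent polynomials in three variables, as finitely supported
coefficient functions on the exponent lattice `ℤ³`.  The coordinates of a
monomial `m` are the exponents of `x12`, `x13`, `x23` respectively. -/
abbrev LP := (ℤ × ℤ × ℤ) →₀ ℂ

/-- Multiplication of a Laurent polynomial by the monomial `x^e`. -/
noncomputable def shiftLP (e : ℤ × ℤ × ℤ) (p : LP) : LP :=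
  Finsupp.mapDomain (fun m => e + m) p

/-- Membership in `H`: invariance under each inversion `x_{ij} ↦ x_{ij}⁻¹`. -/
def InvariantH (p : LP) : Prop :=
  (∀ m : ℤ × ℤ × ℤ, p (-m.1, m.2.1, m.2.2) = p m) ∧
  (∀ m : ℤ × ℤ × ℤ, p (m.1, -m.2.1, m.2.2) = p m) ∧
  (∀ m : ℤ × ℤ × ℤ, p (m.1, m.2.1, -m.2.2) = p m)

/-- A family `φ` (defined for all integer triples, vanishing on non-admissible ones,
with values in `H`) satisfies the genus-two Pieri rule with `φ_{0,0,0} = 1`. -/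
structure IsPieriFamily (φ : ℤ × ℤ × ℤ → LP) : Prop where
  zero_of_not_admissible : ∀ j, ¬ Admissible j → φ j = 0
  mem_H : ∀ j, InvariantH (φ j)
  init : φ (0, 0, 0) = Finsupp.single (0, 0, 0) 1
  pieri12 : ∀ j1 j2 j3 : ℤ, Admissible (j1, j2, j3) →
    shiftLP (1, 0, 0) (φ (j1, j2, j3)) + shiftLP (-1, 0, 0) (φ (j1, j2, j3)) =
      Kc 1 1 j1 j2 j3 • φ (j1+1, j2+1, j3) + Kc 1 (-1) j1 j2 j3 • φ (j1+1, j2-1, j3) +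
      Kc (-1) 1 j1 j2 j3 • φ (j1-1, j2+1, j3) + Kc (-1) (-1) j1 j2 j3 • φ (j1-1, j2-1, j3)
  pieri13 : ∀ j1 j2 j3 : ℤ, Admissible (j1, j2, j3) →
    shiftLP (0, 1, 0) (φ (j1, j2, j3)) + shiftLP (0, -1, 0) (φ (j1, j2, j3)) =
      Kc 1 1 j1 j3 j2 • φ (j1+1, j2, j3+1) + Kc 1 (-1) j1 j3 j2 • φ (j1+1, j2, j3-1) +
      Kc (-1) 1 j1 j3 j2 • φ (j1-1, j2, j3+1) + Kc (-1) (-1) j1 j3 j2 • φ (j1-1, j2, j3-1)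
  pieri23 : ∀ j1 j2 j3 : ℤ, Admissible (j1, j2, j3) →
    shiftLP (0, 0, 1) (φ (j1, j2, j3)) + shiftLP (0, 0, -1) (φ (j1, j2, j3)) =
      Kc 1 1 j2 j3 j1 • φ (j1, j2+1, j3+1) + Kc 1 (-1) j2 j3 j1 • φ (j1, j2+1, j3-1) +
      Kc (-1) 1 j2 j3 j1 • φ (j1, j2-1, j3+1) + Kc (-1) (-1) j2 j3 j1 • φ (j1, j2-1, j3-1)


lemma admissible_iff (j1 j2 j3 : ℤ) : Admissible (j1,j2,j3) ↔
    (0 ≤ j1 ∧ 0 ≤ j2 ∧ 0 ≤ j3 ∧ j1 - j2 ≤ j3 ∧ j2 - j1 ≤ j3 ∧ j3 ≤ j1 + j2 ∧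
      2 ∣ (j1 + j2 + j3)) := by
  unfold Admissible
  simp only [abs_le]
  omega

lemma Kc11_ne_zero (a b c : ℤ) (h1 : 0 < a + 1) (h2 : 0 < b + 1)
    (h3 : 0 < a + b + c + 4) (h4 : 0 < a + b - c + 2) : Kc 1 1 a b c ≠ 0 := by
  unfold Kc
  apply div_ne_zero
  · refine mul_ne_zero (by norm_num) (mul_ne_zero ?_ ?_) <;> rw [Int.cast_ne_zero] <;> omega
  · refine mul_ne_zero (mul_ne_zero (by norm_num) ?_) ?_
    · rw [show ((a:ℂ)+1) = ((a+1 : ℤ):ℂ) by push_cast; ring, Int.cast_ne_zero]; omega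
    · rw [show ((b:ℂ)+1) = ((b+1 : ℤ):ℂ) by push_cast; ring, Int.cast_ne_zero]; omega

lemma shiftLP_apply (t : ℤ×ℤ×ℤ) (p : LP) (x : ℤ×ℤ×ℤ) : shiftLP t p x = p (x - t) := by
  unfold shiftLP
  have h := Finsupp.mapDomain_apply (f := fun m => t + m)
    (fun a b hab => by simpa using hab) p (x - t)
  simpa using h

/-- The conclusion of the leading-term statement, for triples of total weight `2n`. -/
def Concl (φ : ℤ × ℤ × ℤ → LP) (n : ℕ) : Prop :=
  ∀ j1 j2 j3 d1 d2 d3 : ℤ, Admissible (j1,j2,j3) → j1 + j2 + j3 = 2*(n:ℤ) →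
    2*d1 = -j1+j2+j3 → 2*d2 = j1-j2+j3 → 2*d3 = j1+j2-j3 →
    ∃ c : ℂ, c ≠ 0 ∧ φ (j1,j2,j3) (d3,d2,d1) = c ∧
      ∀ e : ℤ×ℤ×ℤ, (n:ℤ) ≤ e.1+e.2.1+e.2.2 → e ≠ (d3,d2,d1) → φ (j1,j2,j3) e = 0

lemma vanish_helper (φ : ℤ×ℤ×ℤ → LP) (hφ : IsPieriFamily φ) (n : ℕ)
    (IH : ∀ m, m < n → Concl φ m)
    (j1 j2 j3 : ℤ) (hsum : j1 + j2 + j3 < 2*(n:ℤ)) (e1 e2 e3 : ℤ)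
    (he : j1 + j2 + j3 < 2*(e1 + e2 + e3)) : φ (j1,j2,j3) (e1,e2,e3) = 0 := by
  by_cases h : Admissible (j1,j2,j3)
  · have hA := (admissible_iff j1 j2 j3).mp h
    obtain ⟨k, hk⟩ := hA.2.2.2.2.2.2
    have hm : j1 + j2 + j3 = 2*((k.toNat : ℕ):ℤ) := by omega
    obtain ⟨c, hc, hpt, hvan⟩ := IH k.toNat (by omega) j1 j2 j3
      ((k.toNat:ℤ) - j1) ((k.toNat:ℤ) - j2) ((k.toNat:ℤ) - j3) h hm
      (by omega) (by omega) (by omega)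
    exact hvan (e1,e2,e3) (by show ((k.toNat:ℕ):ℤ) ≤ e1+e2+e3; omega)
      (by simp only [ne_eq, Prod.mk.injEq]; omega)
  · rw [hφ.zero_of_not_admissible _ h]; simp

lemma key_lemma (φ : ℤ×ℤ×ℤ → LP) (hφ : IsPieriFamily φ) : ∀ n : ℕ, Concl φ n := by
  intro n
  induction n using Nat.strong_induction_on with
  | _ n IH =>
    intro j1 j2 j3 d1 d2 d3 hadm hsum hd1 hd2 hd3
    have hA := (admissible_iff j1 j2 j3).mp hadm
    rcases Nat.eq_zero_or_pos n with hn | hn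
    · subst hn
      obtain ⟨rfl, rfl, rfl⟩ : j1 = 0 ∧ j2 = 0 ∧ j3 = 0 := by omega
      obtain ⟨rfl, rfl, rfl⟩ : d1 = 0 ∧ d2 = 0 ∧ d3 = 0 := by omega
      refine ⟨1, one_ne_zero, ?_, ?_⟩
      · rw [hφ.init]; exact Finsupp.single_eq_same
      · intro e _ hne
        rw [hφ.init]
        exact Finsupp.single_eq_of_ne' (Ne.symm hne)
    · have hCm : Concl φ (n-1) := IH (n-1) (by omega)
      have hd123 : d1 + d2 + d3 = (n:ℤ) := by omega
      rcases show 1 ≤ d3 ∨ 1 ≤ d2 ∨ 1 ≤ d1 by omega with hpos | hpos | hpos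
      · -- use pieri12 at (j1-1, j2-1, j3)
        have hadm' : Admissible (j1-1, j2-1, j3) := (admissible_iff _ _ _).mpr (by omega)
        obtain ⟨c', hc'0, hc'pt, hc'van⟩ := hCm (j1-1) (j2-1) j3 d1 d2 (d3-1) hadm'
          (by omega) (by omega) (by omega) (by omega)
        have hK : Kc 1 1 (j1-1) (j2-1) j3 ≠ 0 :=
          Kc11_ne_zero _ _ _ (by omega) (by omega) (by omega) (by omega)
        have main : ∀ e1 e2 e3 : ℤ, (n:ℤ) ≤ e1 + e2 + e3 →
            Kc 1 1 (j1-1) (j2-1) j3 * φ (j1, j2, j3) (e1, e2, e3) =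
              φ (j1-1, j2-1, j3) (e1-1, e2, e3) := by
          intro e1 e2 e3 he
          have hp := hφ.pieri12 (j1-1) (j2-1) j3 hadm'
          rw [show j1-1+1 = j1 by ring, show j2-1+1 = j2 by ring,
            show j1-1-1 = j1-2 by ring, show j2-1-1 = j2-2 by ring] at hp
          have hpe := congrArg (fun p : LP => p (e1, e2, e3)) hp
          simp only [Finsupp.add_apply, Finsupp.smul_apply, smul_eq_mul, shiftLP_apply,
            Prod.mk_sub_mk, sub_zero, sub_neg_eq_add] at hpe
          have z1 : φ (j1, j2-2, j3) (e1,e2,e3) = 0 :=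
            vanish_helper φ hφ n IH _ _ _ (by omega) _ _ _ (by omega)
          have z2 : φ (j1-2, j2, j3) (e1,e2,e3) = 0 :=
            vanish_helper φ hφ n IH _ _ _ (by omega) _ _ _ (by omega)
          have z3 : φ (j1-2, j2-2, j3) (e1,e2,e3) = 0 :=
            vanish_helper φ hφ n IH _ _ _ (by omega) _ _ _ (by omega)
          have z4 : φ (j1-1, j2-1, j3) (e1+1, e2, e3) = 0 :=
            vanish_helper φ hφ n IH _ _ _ (by omega) _ _ _ (by omega)
          rw [z1, z2, z3, z4] at hpe
          linear_combination -hpe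
        refine ⟨c' / Kc 1 1 (j1-1) (j2-1) j3, div_ne_zero hc'0 hK, ?_, ?_⟩
        · have h := main d3 d2 d1 (by omega)
          rw [hc'pt] at h
          rw [eq_div_iff hK, mul_comm]
          exact h
        · rintro ⟨e1, e2, e3⟩ he hne
          have he' : (n:ℤ) ≤ e1 + e2 + e3 := he
          have hne' : ¬(e1 = d3 ∧ e2 = d2 ∧ e3 = d1) := by
            simpa [Prod.mk.injEq] using hne
          have h := main e1 e2 e3 he'
          have hz : φ (j1-1,j2-1,j3) (e1-1, e2, e3) = 0 :=
            hc'van (e1-1, e2, e3) (by show ((n-1:ℕ):ℤ) ≤ e1-1+e2+e3; omega)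
              (by intro hEq; simp only [Prod.mk.injEq] at hEq
                  exact hne' ⟨by omega, hEq.2.1, hEq.2.2⟩)
          rw [hz] at h
          exact (mul_eq_zero.mp h).resolve_left hK
      · -- use pieri13 at (j1-1, j2, j3-1)
        have hadm' : Admissible (j1-1, j2, j3-1) := (admissible_iff _ _ _).mpr (by omega)
        obtain ⟨c', hc'0, hc'pt, hc'van⟩ := hCm (j1-1) j2 (j3-1) d1 (d2-1) d3 hadm'
          (by omega) (by omega) (by omega) (by omega)
        have hK : Kc 1 1 (j1-1) (j3-1) j2 ≠ 0 :=
          Kc11_ne_zero _ _ _ (by omega) (by omega) (by omega) (by omega)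
        have main : ∀ e1 e2 e3 : ℤ, (n:ℤ) ≤ e1 + e2 + e3 →
            Kc 1 1 (j1-1) (j3-1) j2 * φ (j1, j2, j3) (e1, e2, e3) =
              φ (j1-1, j2, j3-1) (e1, e2-1, e3) := by
          intro e1 e2 e3 he
          have hp := hφ.pieri13 (j1-1) j2 (j3-1) hadm'
          rw [show j1-1+1 = j1 by ring, show j3-1+1 = j3 by ring,
            show j1-1-1 = j1-2 by ring, show j3-1-1 = j3-2 by ring] at hp
          have hpe := congrArg (fun p : LP => p (e1, e2, e3)) hp
          simp only [Finsupp.add_apply, Finsupp.smul_apply, smul_eq_mul, shiftLP_apply,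
            Prod.mk_sub_mk, sub_zero, sub_neg_eq_add] at hpe
          have z1 : φ (j1, j2, j3-2) (e1,e2,e3) = 0 :=
            vanish_helper φ hφ n IH _ _ _ (by omega) _ _ _ (by omega)
          have z2 : φ (j1-2, j2, j3) (e1,e2,e3) = 0 :=
            vanish_helper φ hφ n IH _ _ _ (by omega) _ _ _ (by omega)
          have z3 : φ (j1-2, j2, j3-2) (e1,e2,e3) = 0 :=
            vanish_helper φ hφ n IH _ _ _ (by omega) _ _ _ (by omega)
          have z4 : φ (j1-1, j2, j3-1) (e1, e2+1, e3) = 0 :=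
            vanish_helper φ hφ n IH _ _ _ (by omega) _ _ _ (by omega)
          rw [z1, z2, z3, z4] at hpe
          linear_combination -hpe
        refine ⟨c' / Kc 1 1 (j1-1) (j3-1) j2, div_ne_zero hc'0 hK, ?_, ?_⟩
        · have h := main d3 d2 d1 (by omega)
          rw [hc'pt] at h
          rw [eq_div_iff hK, mul_comm]
          exact h
        · rintro ⟨e1, e2, e3⟩ he hne
          have he' : (n:ℤ) ≤ e1 + e2 + e3 := he
          have hne' : ¬(e1 = d3 ∧ e2 = d2 ∧ e3 = d1) := by
            simpa [Prod.mk.injEq] using hne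
          have h := main e1 e2 e3 he'
          have hz : φ (j1-1, j2, j3-1) (e1, e2-1, e3) = 0 :=
            hc'van (e1, e2-1, e3) (by show ((n-1:ℕ):ℤ) ≤ e1+(e2-1)+e3; omega)
              (by intro hEq; simp only [Prod.mk.injEq] at hEq
                  exact hne' ⟨hEq.1, by omega, hEq.2.2⟩)
          rw [hz] at h
          exact (mul_eq_zero.mp h).resolve_left hK
      · -- use pieri23 at (j1, j2-1, j3-1)
        have hadm' : Admissible (j1, j2-1, j3-1) := (admissible_iff _ _ _).mpr (by omega)
        obtain ⟨c', hc'0, hc'pt, hc'van⟩ := hCm j1 (j2-1) (j3-1) (d1-1) d2 d3 hadm'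
          (by omega) (by omega) (by omega) (by omega)
        have hK : Kc 1 1 (j2-1) (j3-1) j1 ≠ 0 :=
          Kc11_ne_zero _ _ _ (by omega) (by omega) (by omega) (by omega)
        have main : ∀ e1 e2 e3 : ℤ, (n:ℤ) ≤ e1 + e2 + e3 →
            Kc 1 1 (j2-1) (j3-1) j1 * φ (j1, j2, j3) (e1, e2, e3) =
              φ (j1, j2-1, j3-1) (e1, e2, e3-1) := by
          intro e1 e2 e3 he
          have hp := hφ.pieri23 j1 (j2-1) (j3-1) hadm'
          rw [show j2-1+1 = j2 by ring, show j3-1+1 = j3 by ring,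
            show j2-1-1 = j2-2 by ring, show j3-1-1 = j3-2 by ring] at hp
          have hpe := congrArg (fun p : LP => p (e1, e2, e3)) hp
          simp only [Finsupp.add_apply, Finsupp.smul_apply, smul_eq_mul, shiftLP_apply,
            Prod.mk_sub_mk, sub_zero, sub_neg_eq_add] at hpe
          have z1 : φ (j1, j2, j3-2) (e1,e2,e3) = 0 :=
            vanish_helper φ hφ n IH _ _ _ (by omega) _ _ _ (by omega)
          have z2 : φ (j1, j2-2, j3) (e1,e2,e3) = 0 :=
            vanish_helper φ hφ n IH _ _ _ (by omega) _ _ _ (by omega)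
          have z3 : φ (j1, j2-2, j3-2) (e1,e2,e3) = 0 :=
            vanish_helper φ hφ n IH _ _ _ (by omega) _ _ _ (by omega)
          have z4 : φ (j1, j2-1, j3-1) (e1, e2, e3+1) = 0 :=
            vanish_helper φ hφ n IH _ _ _ (by omega) _ _ _ (by omega)
          rw [z1, z2, z3, z4] at hpe
          linear_combination -hpe
        refine ⟨c' / Kc 1 1 (j2-1) (j3-1) j1, div_ne_zero hc'0 hK, ?_, ?_⟩
        · have h := main d3 d2 d1 (by omega)
          rw [hc'pt] at h
          rw [eq_div_iff hK, mul_comm]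
          exact h
        · rintro ⟨e1, e2, e3⟩ he hne
          have he' : (n:ℤ) ≤ e1 + e2 + e3 := he
          have hne' : ¬(e1 = d3 ∧ e2 = d2 ∧ e3 = d1) := by
            simpa [Prod.mk.injEq] using hne
          have h := main e1 e2 e3 he'
          have hz : φ (j1, j2-1, j3-1) (e1, e2, e3-1) = 0 :=
            hc'van (e1, e2, e3-1) (by show ((n-1:ℕ):ℤ) ≤ e1+e2+(e3-1); omega)
              (by intro hEq; simp only [Prod.mk.injEq] at hEq
                  exact hne' ⟨hEq.1, hEq.2.1, by omega⟩)
          rw [hz] at h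
          exact (mul_eq_zero.mp h).resolve_left hK

/-- For a family satisfying the genus-two Pieri rule with
`φ_{0,0,0} = 1` and an admissible triple `(j1,j2,j3)`, with
`N = (j1+j2+j3)/2`, `d1 = (−j1+j2+j3)/2`, `d2 = (j1−j2+j3)/2`, `d3 = (j1+j2−j3)/2`,
the coefficient of `φ_{j1,j2,j3}` on `x12^{d3} x13^{d2} x23^{d1}` is a nonzero
constant `c`, and every other coefficient in total degree `≥ N` vanishes. -/
theorem genus_two_pieri_leading_term (φ : ℤ × ℤ × ℤ → LP) (hφ : IsPieriFamily φ)
    (j1 j2 j3 N d1 d2 d3 : ℤ) (hadm : Admissible (j1, j2, j3))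
    (hN : 2 * N = j1 + j2 + j3) (hd1 : 2 * d1 = -j1 + j2 + j3)
    (hd2 : 2 * d2 = j1 - j2 + j3) (hd3 : 2 * d3 = j1 + j2 - j3) :
    ∃ c : ℂ, c ≠ 0 ∧ φ (j1, j2, j3) (d3, d2, d1) = c ∧
      ∀ e : ℤ × ℤ × ℤ, N ≤ e.1 + e.2.1 + e.2.2 → e ≠ (d3, d2, d1) →
        φ (j1, j2, j3) e = 0 := by
  have hA := (admissible_iff j1 j2 j3).mp hadm
  have hN0 : 0 ≤ N := by omega
  obtain ⟨c, h1, h2, h3⟩ := key_lemma φ hφ N.toNat j1 j2 j3 d1 d2 d3 hadm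
    (by omega) hd1 hd2 hd3
  exact ⟨c, h1, h2, fun e he hne => h3 e (by omega) hne⟩
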